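/- Let x, y, z be integers with gcd(x^m − y^m, z) = gcd(x^m − z^m, y) = gcd(y^m − z^m, x) = 1, where m > 1. Let f(x,y,z) = x^{2m}+y^{2m}+z^{2m}−2x^m y^m−2x^m z^m−2y^m z^m, assume f(x,y,z) is not a perfect square, let k = ℚ(√f(x,y,z)) and v = √f(x,y,z). Then the 𝒪_k-ideals ((v + x^m + y^m − z^m)/2) and ((v − x^m − y^m + z^m)/2) are coprime, and hence ((v + x^m + y^m − z^m)/2) is an m-th power of an ideal of 𝒪_k. -/

import Mathlib

open NumberField


/-- For `m > 1` and integers `x, y, z` with `gcd(x^m−y^m,z) = gcd(x^m−z^m,y) =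
gcd(y^m−z^m,x) = 1`, with `f(x,y,z)` the ternary form, not a perfect square,
`K = ℚ(√f)` and `v = √f`:  the ideals `((v+x^m+y^m−z^m)/2)` and `((v−x^m−y^m+z^m)/2)`
of `𝒪_K` are coprime, and `((v+x^m+y^m−z^m)/2)` is an `m`-th power of an ideal. -/
theorem stmt_7 (m : ℕ) (hm : 1 < m) (x y z : ℤ)
    (h1 : IsCoprime (x ^ m - y ^ m) z) (h2 : IsCoprime (x ^ m - z ^ m) y)
    (h3 : IsCoprime (y ^ m - z ^ m) x)
    (hns : ¬ ∃ w : ℤ, w ^ 2 = x ^ (2 * m) + y ^ (2 * m) + z ^ (2 * m)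
      - 2 * x ^ m * y ^ m - 2 * x ^ m * z ^ m - 2 * y ^ m * z ^ m)
    (K : Type*) [Field K] [NumberField K] (v : K)
    (hv : v ^ 2 = (x : K) ^ (2 * m) + (y : K) ^ (2 * m) + (z : K) ^ (2 * m)
      - 2 * (x : K) ^ m * (y : K) ^ m - 2 * (x : K) ^ m * (z : K) ^ m
      - 2 * (y : K) ^ m * (z : K) ^ m)
    (hgen : IntermediateField.adjoin ℚ {v} = ⊤)
    (α β : NumberField.RingOfIntegers K)
    (hα : algebraMap (NumberField.RingOfIntegers K) K α
      = (v + (x : K) ^ m + (y : K) ^ m - (z : K) ^ m) / 2)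
    (hβ : algebraMap (NumberField.RingOfIntegers K) K β
      = (v - (x : K) ^ m - (y : K) ^ m + (z : K) ^ m) / 2) :
    (Ideal.span {α} ⊔ Ideal.span {β} = ⊤) ∧
    ∃ I : Ideal (NumberField.RingOfIntegers K), Ideal.span {α} = I ^ m := by
  have hinj : Function.Injective (algebraMap (𝓞 K) K) :=
    FaithfulSMul.algebraMap_injective (𝓞 K) K
  -- α * β = -((x*y)^m)
  have hmul : α * β = -(((x * y : ℤ) : 𝓞 K)) ^ m := by
    apply hinj
    rw [map_mul, hα, hβ, map_neg, map_pow, map_intCast]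
    push_cast
    field_simp
    ring_nf
    linear_combination hv
  -- α - β = x^m + y^m - z^m
  have hsub : α - β = ((x ^ m + y ^ m - z ^ m : ℤ) : 𝓞 K) := by
    apply hinj
    rw [map_sub, hα, hβ, map_intCast]
    push_cast
    ring
  -- coprimality
  have hcop : Ideal.span {α} ⊔ Ideal.span {β} = ⊤ := by
    by_contra hne
    obtain ⟨P, hPmax, hle⟩ := Ideal.exists_le_maximal _ hne
    have hαP : α ∈ P := hle (le_sup_left (a := Ideal.span {α})
      (Ideal.mem_span_singleton_self α))
    have hβP : β ∈ P := hle (le_sup_right (b := Ideal.span {β})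
      (Ideal.mem_span_singleton_self β))
    have hprime := hPmax.isPrime
    have hxy : ((x * y : ℤ) : 𝓞 K) ∈ P := by
      have h0 : -(((x * y : ℤ) : 𝓞 K)) ^ m ∈ P := hmul ▸ P.mul_mem_right β hαP
      exact hprime.mem_of_pow_mem m (by simpa using P.neg_mem_iff.mpr h0)
    have hsubP : ((x ^ m + y ^ m - z ^ m : ℤ) : 𝓞 K) ∈ P := hsub ▸ P.sub_mem hαP hβP
    have hone : (1 : 𝓞 K) ∈ P := by
      rcases hprime.mem_or_mem (by push_cast at hxy ⊢; exact hxy) with hx | hy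
      · obtain ⟨a, b, hab⟩ := h3
        have hyz : ((y ^ m - z ^ m : ℤ) : 𝓞 K) ∈ P := by
          have := P.sub_mem hsubP (P.pow_mem_of_mem hx m (by omega))
          push_cast at this ⊢
          convert this using 1; ring
        have := P.add_mem (P.mul_mem_left ((a : ℤ) : 𝓞 K) hyz)
          (P.mul_mem_left ((b : ℤ) : 𝓞 K) hx)
        rw [show ((a:ℤ):𝓞 K) * ((y ^ m - z ^ m : ℤ) : 𝓞 K) + ((b:ℤ):𝓞 K) * ((x:ℤ):𝓞 K)
          = ((a * (y ^ m - z ^ m) + b * x : ℤ) : 𝓞 K) by push_cast; ring, hab] at this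
        simpa using this
      · obtain ⟨a, b, hab⟩ := h2
        have hxz : ((x ^ m - z ^ m : ℤ) : 𝓞 K) ∈ P := by
          have := P.sub_mem hsubP (P.pow_mem_of_mem hy m (by omega))
          push_cast at this ⊢
          convert this using 1; ring
        have := P.add_mem (P.mul_mem_left ((a : ℤ) : 𝓞 K) hxz)
          (P.mul_mem_left ((b : ℤ) : 𝓞 K) hy)
        rw [show ((a:ℤ):𝓞 K) * ((x ^ m - z ^ m : ℤ) : 𝓞 K) + ((b:ℤ):𝓞 K) * ((y:ℤ):𝓞 K)
          = ((a * (x ^ m - z ^ m) + b * y : ℤ) : 𝓞 K) by push_cast; ring, hab] at this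
        simpa using this
    exact hprime.ne_top (Ideal.eq_top_iff_one P |>.mpr hone)
  refine ⟨hcop, ?_⟩
  -- product of the ideals is an m-th power
  have hprod : Ideal.span {α} * Ideal.span {β}
      = (Ideal.span {((x * y : ℤ) : 𝓞 K)}) ^ m := by
    rw [Ideal.span_singleton_mul_span_singleton, hmul, Ideal.span_singleton_neg,
      Ideal.span_singleton_pow]
  letI : GCDMonoid (Ideal (𝓞 K)) := UniqueFactorizationMonoid.toGCDMonoid _
  haveI : Subsingleton (Ideal (𝓞 K))ˣ := ⟨fun u w => Units.ext (by
    rw [Ideal.isUnit_iff.mp u.isUnit, Ideal.isUnit_iff.mp w.isUnit])⟩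
  have hgcd : IsUnit (gcd (Ideal.span {α}) (Ideal.span {β})) := by
    rw [Ideal.isUnit_iff]
    have hd1 := Ideal.le_of_dvd (gcd_dvd_left (Ideal.span {α}) (Ideal.span {β}))
    have hd2 := Ideal.le_of_dvd (gcd_dvd_right (Ideal.span {α}) (Ideal.span {β}))
    exact top_le_iff.mp (hcop ▸ sup_le hd1 hd2)
  exact exists_eq_pow_of_mul_eq_pow hgcd hprod
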